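/- For d > 0, α > 0, r > 0 and L > 0, the principal eigenvalue λ of the problem d φ'' − α φ' + (r + λ)φ = 0 on (0,L), with boundary conditions d φ'(0) − α φ(0) = 0 and φ(L) = 0, is negative if and only if d > α²/(4r) and L > L*(d), where L*(d) = (π − arctan(√(4dr − α²)/α)) / (√(4dr − α²)/(2d)). -/

import Mathlib

open Set Real

/-- The set of eigenvalues of the Speirs–Gurney problem admitting a positive
eigenfunction:  d φ'' − α φ' + (r + λ) φ = 0 on (0,L), with
d φ'(0) − α φ(0) = 0 and φ(L) = 0. -/
def SGEigen (d α r L : ℝ) : Set ℝ :=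
  {lam | ∃ φ : ℝ → ℝ, ContDiff ℝ 2 φ ∧ (∀ x ∈ Ioo 0 L, 0 < φ x) ∧
    (∀ x ∈ Ioo 0 L, d * deriv (deriv φ) x - α * deriv φ x + (r + lam) * φ x = 0) ∧
    d * deriv φ 0 - α * φ 0 = 0 ∧ φ L = 0}

/-- The critical river length L*(d). -/
noncomputable def Lstar (d α r : ℝ) : ℝ :=
  (π - arctan (Real.sqrt (4 * d * r - α ^ 2) / α)) / (Real.sqrt (4 * d * r - α ^ 2) / (2 * d))

lemma trig_comb {p ω : ℝ} (hp : 0 < p) (hω : 0 < ω) (θ : ℝ) :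
    ω * Real.cos θ + p * Real.sin θ =
      Real.sqrt (ω^2 + p^2) * Real.sin (θ + Real.arctan (ω / p)) := by
  have hq : 0 < Real.sqrt (ω^2+p^2) := Real.sqrt_pos.mpr (by positivity)
  have h1 : Real.sqrt (1 + (ω/p)^2) = Real.sqrt (ω^2+p^2) / p := by
    rw [show 1 + (ω/p)^2 = (ω^2+p^2)/p^2 by field_simp; ring,
      Real.sqrt_div (by positivity), Real.sqrt_sq hp.le]
  rw [Real.sin_add, Real.cos_arctan, Real.sin_arctan, h1]
  field_simp
  ring

lemma Lstar_lt {d a r1 r2 : ℝ} (hd : 0 < d) (ha : 0 < a)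
    (h1 : a^2 < 4*d*r1) (h12 : r1 < r2) : Lstar d a r2 < Lstar d a r1 := by
  have hT1 : 0 < 4*d*r1 - a^2 := by linarith
  have hT2 : 4*d*r1 - a^2 < 4*d*r2 - a^2 := by nlinarith
  have hs : 0 < Real.sqrt (4*d*r1 - a^2) := Real.sqrt_pos.mpr hT1
  have hst : Real.sqrt (4*d*r1 - a^2) < Real.sqrt (4*d*r2 - a^2) := Real.sqrt_lt_sqrt hT1.le hT2
  have ht : 0 < Real.sqrt (4*d*r2 - a^2) := hs.trans hst
  have harc : Real.arctan (Real.sqrt (4*d*r1 - a^2)/a) < Real.arctan (Real.sqrt (4*d*r2 - a^2)/a) :=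
    Real.arctan_strictMono (by gcongr)
  have hnum2 : 0 < π - Real.arctan (Real.sqrt (4*d*r2 - a^2)/a) := by
    have h := Real.arctan_lt_pi_div_two (Real.sqrt (4*d*r2 - a^2)/a)
    have := Real.pi_pos
    linarith
  unfold Lstar
  rw [div_lt_div_iff₀ (by positivity) (by positivity)]
  have e1 : Real.sqrt (4*d*r1-a^2)/(2*d) < Real.sqrt (4*d*r2-a^2)/(2*d) := by gcongr
  have step1 := mul_lt_mul_of_pos_left e1 hnum2
  have step2 : (π - Real.arctan (Real.sqrt (4*d*r2 - a^2)/a)) * (Real.sqrt (4*d*r2-a^2)/(2*d))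
      < (π - Real.arctan (Real.sqrt (4*d*r1 - a^2)/a)) * (Real.sqrt (4*d*r2-a^2)/(2*d)) :=
    mul_lt_mul_of_pos_right (by linarith) (by positivity)
  linarith

set_option maxHeartbeats 1600000 in
lemma mem_char {d a r L : ℝ} (hd : 0 < d) (ha : 0 < a) (hL : 0 < L)
    {lam : ℝ} (h : lam ∈ SGEigen d a r L) :
    a^2 < 4*d*(r+lam) ∧ L = Lstar d a (r+lam) := by
  obtain ⟨φ, hφ, hpos, hode, hbc0, hbcL⟩ := h
  -- regularity
  have hφd : Differentiable ℝ φ := hφ.differentiable (by norm_num)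
  have hφ1 : ContDiff ℝ 1 (deriv φ) := by
    have h2 : ContDiff ℝ ((1:WithTop ℕ∞) + 1) φ := by exact_mod_cast hφ
    exact (contDiff_succ_iff_deriv.mp h2).2.2
  have hφ'd : Differentiable ℝ (deriv φ) := hφ1.differentiable one_ne_zero
  have hφ''c : Continuous (deriv (deriv φ)) := hφ1.continuous_deriv le_rfl
  -- ODE on closed interval
  have hodeI : ∀ x ∈ Icc 0 L, d * deriv (deriv φ) x - a * deriv φ x + (r+lam) * φ x = 0 := by
    intro x hx
    have hcl : Icc 0 L ⊆ {x | d * deriv (deriv φ) x - a * deriv φ x + (r+lam) * φ x = 0} := by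
      rw [← closure_Ioo hL.ne]
      refine closure_minimal (fun y hy => hode y hy) (isClosed_eq ?_ continuous_const)
      exact ((continuous_const.mul hφ''c).sub (continuous_const.mul hφ'd.continuous)).add
        (continuous_const.mul hφd.continuous)
    exact hcl hx
  -- nonnegativity on closed interval
  have hnn : ∀ x ∈ Icc 0 L, 0 ≤ φ x := by
    intro x hx
    have hcl : Icc 0 L ⊆ {x | 0 ≤ φ x} := by
      rw [← closure_Ioo hL.ne]
      exact closure_minimal (fun y hy => (hpos y hy).le)
        (isClosed_le continuous_const hφd.continuous)
    exact hcl hx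
  -- exponential substitution
  set p := a/(2*d) with hp_def
  have hp : 0 < p := by positivity
  set ψ : ℝ → ℝ := fun x => Real.exp (-p*x) * φ x with hψ_def
  have hψpos : ∀ x ∈ Ioo 0 L, 0 < ψ x := fun x hx => mul_pos (Real.exp_pos _) (hpos x hx)
  have hψnn : ∀ x ∈ Icc 0 L, 0 ≤ ψ x := fun x hx => mul_nonneg (Real.exp_pos _).le (hnn x hx)
  have hψL : ψ L = 0 := by simp [hψ_def, hbcL]
  have he : ∀ x : ℝ, HasDerivAt (fun x => Real.exp (-p*x)) (-p * Real.exp (-p*x)) x := by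
    intro x
    have h1 : HasDerivAt (fun x : ℝ => -p*x) (-p) x := by
      simpa using (hasDerivAt_id x).const_mul (-p)
    have h2 := (Real.hasDerivAt_exp (-p*x)).comp x h1
    simpa [Function.comp_def, mul_comm] using h2
  have hψ' : ∀ x, HasDerivAt ψ (Real.exp (-p*x) * (deriv φ x - p * φ x)) x := by
    intro x
    have h2 : HasDerivAt (fun x => Real.exp (-p*x) * φ x)
        (-p * Real.exp (-p*x) * φ x + Real.exp (-p*x) * deriv φ x) x := (he x).mul (hφd x).hasDerivAt
    convert h2 using 1
    ring
  have hdψ : deriv ψ = fun x => Real.exp (-p*x) * (deriv φ x - p * φ x) :=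
    funext fun x => (hψ' x).deriv
  have hψ'' : ∀ x, HasDerivAt (deriv ψ)
      (Real.exp (-p*x) * (deriv (deriv φ) x - 2*p*deriv φ x + p^2 * φ x)) x := by
    intro x
    rw [hdψ]
    have h2 : HasDerivAt (fun x => deriv φ x - p * φ x) (deriv (deriv φ) x - p * deriv φ x) x :=
      (hφ'd x).hasDerivAt.sub (((hφd x).hasDerivAt).const_mul p)
    have h3 : HasDerivAt (fun x => Real.exp (-p*x) * (deriv φ x - p * φ x))
        (-p * Real.exp (-p*x) * (deriv φ x - p * φ x) + Real.exp (-p*x) * (deriv (deriv φ) x - p * deriv φ x)) x :=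
      (he x).mul h2
    convert h3 using 1
    ring
  have hdψ2 : ∀ x, deriv (deriv ψ) x
      = Real.exp (-p*x) * (deriv (deriv φ) x - 2*p*deriv φ x + p^2*φ x) :=
    fun x => (hψ'' x).deriv
  set k := (r+lam)/d - p^2 with hk_def
  have hodeψ : ∀ x ∈ Icc 0 L, deriv (deriv ψ) x = -k * ψ x := by
    intro x hx
    have h0 := hodeI x hx
    rw [hdψ2]
    have hφ2 : deriv (deriv φ) x = (a * deriv φ x - (r+lam) * φ x)/d := by
      field_simp
      linarith
    rw [hφ2, hψ_def]
    simp only [hk_def, hp_def]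
    field_simp
    ring
  have hψ0 : ψ 0 = φ 0 := by simp [hψ_def]
  have hψ'0 : deriv ψ 0 = p * φ 0 := by
    rw [hdψ]
    have hφ'0 : deriv φ 0 = 2*p*φ 0 := by
      simp only [hp_def]
      field_simp
      linarith
    simp [hφ'0]
    ring
  have hφ0nn : 0 ≤ φ 0 := hnn 0 (by constructor <;> [rfl; exact hL.le])
  have hmem2 : L/2 ∈ Ioo 0 L := ⟨by linarith, by linarith⟩
  -- continuity helpers
  have hexpc : Continuous (fun x : ℝ => Real.exp (-p*x)) :=
    Real.continuous_exp.comp (continuous_const.mul continuous_id)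
  have hψc : Continuous ψ := hexpc.mul hφd.continuous
  have hψ'c : Continuous (deriv ψ) := by
    rw [hdψ]
    exact hexpc.mul (hφ'd.continuous.sub (continuous_const.mul hφd.continuous))
  -- k must be positive
  have hk : 0 < k := by
    by_contra hkn
    push_neg at hkn
    have h1 : ∀ x ∈ interior (Icc (0:ℝ) L), 0 ≤ deriv (deriv ψ) x := by
      rw [interior_Icc]
      intro x hx
      rw [hodeψ x (Ioo_subset_Icc_self hx)]
      nlinarith [hψpos x hx]
    have hmono' : MonotoneOn (deriv ψ) (Icc 0 L) :=
      monotoneOn_of_deriv_nonneg (convex_Icc 0 L) hψ'c.continuousOn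
        (fun x _ => ((hψ'' x).differentiableAt).differentiableWithinAt) h1
    have h2 : ∀ x ∈ interior (Icc (0:ℝ) L), 0 ≤ deriv ψ x := by
      rw [interior_Icc]
      intro x hx
      have := hmono' ⟨le_refl 0, hL.le⟩ (Ioo_subset_Icc_self hx) hx.1.le
      rw [hψ'0] at this
      nlinarith
    have hmono : MonotoneOn ψ (Icc 0 L) :=
      monotoneOn_of_deriv_nonneg (convex_Icc 0 L) hψc.continuousOn
        (fun x _ => ((hψ' x).differentiableAt).differentiableWithinAt) h2
    have h3 := hmono (Ioo_subset_Icc_self hmem2) ⟨hL.le, le_refl L⟩ (by linarith)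
    rw [hψL] at h3
    exact absurd h3 (not_le.mpr (hψpos _ hmem2))
  -- k > 0 : explicit solution via Wronskian constancy
  set ω := Real.sqrt k with hω_def
  have hω : 0 < ω := Real.sqrt_pos.mpr hk
  have hω2 : ω^2 = k := Real.sq_sqrt hk.le
  have hcos : ∀ x : ℝ, HasDerivAt (fun x => Real.cos (ω*x)) (-(ω * Real.sin (ω*x))) x := by
    intro x
    have h1 : HasDerivAt (fun y : ℝ => ω*y) ω x := by simpa using (hasDerivAt_id x).const_mul ω
    have h2 := (Real.hasDerivAt_cos (ω*x)).comp x h1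
    simpa [Function.comp_def, mul_comm] using h2
  have hsin : ∀ x : ℝ, HasDerivAt (fun x => Real.sin (ω*x)) (ω * Real.cos (ω*x)) x := by
    intro x
    have h1 : HasDerivAt (fun y : ℝ => ω*y) ω x := by simpa using (hasDerivAt_id x).const_mul ω
    have h2 := (Real.hasDerivAt_sin (ω*x)).comp x h1
    simpa [Function.comp_def, mul_comm] using h2
  have hA : ∀ y : ℝ, HasDerivAt ψ (deriv ψ y) y := fun y => ((hψ' y).differentiableAt).hasDerivAt
  have hB : ∀ y : ℝ, HasDerivAt (deriv ψ) (deriv (deriv ψ) y) y :=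
    fun y => ((hψ'' y).differentiableAt).hasDerivAt
  have hcosc : Continuous (fun x : ℝ => Real.cos (ω*x)) :=
    Real.continuous_cos.comp (continuous_const.mul continuous_id)
  have hsinc : Continuous (fun x : ℝ => Real.sin (ω*x)) :=
    Real.continuous_sin.comp (continuous_const.mul continuous_id)
  -- W2 constant
  have hW2 := constant_of_has_deriv_right_zero
      (f := fun x => ψ x * (ω * Real.cos (ω*x)) - deriv ψ x * Real.sin (ω*x)) (a := 0) (b := L)
      ((hψc.mul (continuous_const.mul hcosc)).sub (hψ'c.mul hsinc)).continuousOn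
      (by
        intro x hx
        have hD := ((hA x).mul ((hcos x).const_mul ω)).sub ((hB x).mul (hsin x))
        have h0 : deriv ψ x * (ω * Real.cos (ω*x)) + ψ x * (ω * -(ω * Real.sin (ω*x))) -
            (deriv (deriv ψ) x * Real.sin (ω*x) + deriv ψ x * (ω * Real.cos (ω*x))) = 0 := by
          rw [hodeψ x (Ico_subset_Icc_self hx)]
          linear_combination (-(ψ x * Real.sin (ω*x))) * hω2
        rw [h0] at hD
        exact hD.hasDerivWithinAt)
  -- W1 constant
  have hW1 := constant_of_has_deriv_right_zero
      (f := fun x => ψ x * (-(ω * Real.sin (ω*x))) - deriv ψ x * Real.cos (ω*x)) (a := 0) (b := L)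
      ((hψc.mul ((continuous_const.mul hsinc).neg)).sub (hψ'c.mul hcosc)).continuousOn
      (by
        intro x hx
        have hD := ((hA x).mul (((hsin x).const_mul ω).neg)).sub ((hB x).mul (hcos x))
        have h0 : deriv ψ x * -(ω * Real.sin (ω*x)) + ψ x * -(ω * (ω * Real.cos (ω*x))) -
            (deriv (deriv ψ) x * Real.cos (ω*x) + deriv ψ x * -(ω * Real.sin (ω*x))) = 0 := by
          rw [hodeψ x (Ico_subset_Icc_self hx)]
          linear_combination (-(ψ x * Real.cos (ω*x))) * hω2
        simp only [Pi.neg_apply] at hD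
        rw [h0] at hD
        exact hD.hasDerivWithinAt)
  have hW2' : ∀ x ∈ Icc 0 L, ψ x * (ω * Real.cos (ω*x)) - deriv ψ x * Real.sin (ω*x) = φ 0 * ω := by
    intro x hx
    have h := hW2 x hx
    simpa [hψ0, hψ'0] using h
  have hW1' : ∀ x ∈ Icc 0 L, ψ x * (-(ω * Real.sin (ω*x))) - deriv ψ x * Real.cos (ω*x) = -(p * φ 0) := by
    intro x hx
    have h := hW1 x hx
    simpa [hψ0, hψ'0] using h
  -- explicit formula for ψ
  have key : ∀ x ∈ Icc 0 L, ω * ψ x = φ 0 * (ω * Real.cos (ω*x) + p * Real.sin (ω*x)) := by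
    intro x hx
    have e1 := hW2' x hx
    have e2 := hW1' x hx
    have pyth := Real.sin_sq_add_cos_sq (ω*x)
    linear_combination Real.cos (ω*x) * e1 - Real.sin (ω*x) * e2 - ω * ψ x * pyth
  -- φ 0 is positive
  have hφ0 : 0 < φ 0 := by
    rcases hφ0nn.lt_or_eq with h | h
    · exact h
    · exfalso
      have e := key (L/2) (Ioo_subset_Icc_self hmem2)
      rw [← h] at e
      simp at e
      rcases e with e | e
      · exact hω.ne' e
      · exact (hψpos _ hmem2).ne' e
  -- trigonometric phase analysis
  set δ := Real.arctan (ω/p) with hδ_def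
  have hδpos : 0 < δ := by
    have h1 := Real.arctan_strictMono (show (0:ℝ) < ω/p by positivity)
    rw [Real.arctan_zero] at h1
    exact h1
  have hδlt : δ < π/2 := Real.arctan_lt_pi_div_two _
  have hπ := Real.pi_pos
  set q := Real.sqrt (ω^2+p^2) with hq_def
  have hq : 0 < q := Real.sqrt_pos.mpr (by positivity)
  have trig : ∀ θ : ℝ, ω * Real.cos θ + p * Real.sin θ = q * Real.sin (θ + δ) :=
    fun θ => trig_comb hp hω θ
  have hsinL : Real.sin (ω*L + δ) = 0 := by
    have e := key L ⟨hL.le, le_refl L⟩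
    rw [hψL, trig (ω*L), mul_zero] at e
    rcases mul_eq_zero.mp e.symm with h | h
    · exact absurd h hφ0.ne'
    · rcases mul_eq_zero.mp h with h2 | h2
      · exact absurd h2 hq.ne'
      · exact h2
  have h_ge : π ≤ ω*L + δ := by
    by_contra hlt
    push_neg at hlt
    have hpos' : 0 < ω*L + δ := by nlinarith [mul_pos hω hL]
    exact (Real.sin_pos_of_pos_of_lt_pi hpos' hlt).ne' hsinL
  have h_le : ω*L + δ ≤ π := by
    by_contra hgt
    push_neg at hgt
    set x₀ := (π - δ)/ω with hx₀_def
    have hx₀pos : 0 < x₀ := div_pos (by linarith) hω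
    have hx₀lt : x₀ < L := by
      rw [hx₀_def, div_lt_iff₀ hω]
      nlinarith
    have hωx₀ : ω * x₀ = π - δ := by
      rw [hx₀_def]
      field_simp
    have e := key x₀ ⟨hx₀pos.le, hx₀lt.le⟩
    rw [trig (ω*x₀), hωx₀] at e
    have hsin0 : Real.sin (π - δ + δ) = 0 := by
      rw [sub_add_cancel, Real.sin_pi]
    rw [hsin0, mul_zero, mul_zero] at e
    exact (mul_pos hω (hψpos x₀ ⟨hx₀pos, hx₀lt⟩)).ne' e
  have hωL : ω * L = π - δ := by linarith
  -- convert to the Lstar form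
  set S := 4*d*(r+lam) - a^2 with hS_def
  have hkS : k = S/(2*d)^2 := by
    rw [hk_def, hp_def, hS_def]
    field_simp
    ring
  have hS : 0 < S := by
    have h1 : S = k * (2*d)^2 := by
      rw [hkS]
      field_simp
    rw [h1]
    exact mul_pos hk (by positivity)
  have hωS : ω = Real.sqrt S / (2*d) := by
    rw [hω_def, hkS, Real.sqrt_div hS.le, Real.sqrt_sq (by positivity)]
  have hratio : ω/p = Real.sqrt S / a := by
    rw [hωS, hp_def]
    field_simp
  refine ⟨by linarith, ?_⟩
  simp only [Lstar]
  rw [← hS_def, ← hratio, ← hωS, ← hδ_def, eq_div_iff hω.ne']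
  linarith [hωL]


theorem stmt_2 (d α r L : ℝ) (hd : 0 < d) (hα : 0 < α) (hr : 0 < r) (hL : 0 < L)
    (lam : ℝ) (hlam : IsLeast (SGEigen d α r L) lam) :
    lam < 0 ↔ (d > α ^ 2 / (4 * r) ∧ L > Lstar d α r) := by
  obtain ⟨hmem, -⟩ := hlam
  obtain ⟨hS, hLeq⟩ := mem_char hd hα hL hmem
  constructor
  · intro hneg
    have h1 : α^2 < 4*d*r := by nlinarith
    refine ⟨?_, ?_⟩
    · rw [gt_iff_lt, div_lt_iff₀ (by positivity)]
      nlinarith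
    · rw [hLeq]
      exact Lstar_lt hd hα hS (by linarith)
  · rintro ⟨h1, h2⟩
    have h1' : α^2 < 4*d*r := by
      rw [gt_iff_lt, div_lt_iff₀ (by positivity)] at h1
      nlinarith
    by_contra hnn
    push_neg at hnn
    rcases hnn.lt_or_eq with h | h
    · have := Lstar_lt hd hα h1' (show r < r + lam by linarith)
      rw [hLeq] at h2
      linarith
    · rw [← h, add_zero] at hLeq
      rw [hLeq] at h2
      exact lt_irrefl _ h2
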